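/- Let θ : G → ℤₚˣ be a homomorphism with torsion-free image acting on ℤₚ, and suppose λ ∈ pℤₚ is nonzero. If θ(g) ≠ 1, then (θ(g)^λ − 1)/(θ(g) − 1) ≠ 0, and if θ(g) = 1 then λ ≠ 0; in either case, any 1-cocycle c : G → ℤₚ with c(g) = 1 satisfies c(g^λ) ≠ 0. (Equivalently: for a unit u ∈ 1 + pℤₚ of infinite order or u = 1, and 0 ≠ λ ∈ pℤₚ, the quantity equal to λ when u = 1, and (u^λ − 1)/(u − 1) when u ≠ 1, is nonzero in ℤₚ.) -/

import Mathlib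

open Filter

private lemma aux_norm_le {p : ℕ} [Fact p.Prime] (x : ℤ_[p]) (n : ℕ) :
    ‖x ^ n - 1‖ ≤ ‖x - 1‖ := by
  rw [← geom_sum_mul, norm_mul]
  calc ‖∑ i ∈ Finset.range n, x ^ i‖ * ‖x - 1‖ ≤ 1 * ‖x - 1‖ := by
        gcongr; exact PadicInt.norm_le_one _
    _ = ‖x - 1‖ := one_mul _

private lemma aux_norm_pow {p : ℕ} [Fact p.Prime] (x : ℤ_[p]) (hx : ‖x - 1‖ < 1)
    (n : ℕ) (hn : ¬ (p : ℤ) ∣ (n : ℤ)) : ‖x ^ n - 1‖ = ‖x - 1‖ := by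
  rw [← geom_sum_mul, norm_mul]
  suffices h : ‖∑ i ∈ Finset.range n, x ^ i‖ = 1 by rw [h, one_mul]
  have hd : (p : ℤ_[p]) ∣ (∑ i ∈ Finset.range n, x ^ i) - (n : ℤ_[p]) := by
    have : (∑ i ∈ Finset.range n, x ^ i) - (n : ℤ_[p])
        = ∑ i ∈ Finset.range n, (x ^ i - 1) := by
      rw [Finset.sum_sub_distrib]; simp
    rw [this]
    refine Finset.dvd_sum fun i _ => ?_
    have h1 : (p : ℤ_[p]) ∣ x - 1 := (PadicInt.norm_lt_one_iff_dvd _).mp hx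
    exact h1.trans ⟨∑ j ∈ Finset.range i, x ^ j, by rw [← geom_sum_mul]; ring⟩
  refine le_antisymm (PadicInt.norm_le_one _) ?_
  by_contra hlt
  push_neg at hlt
  have hS : (p : ℤ_[p]) ∣ ∑ i ∈ Finset.range n, x ^ i :=
    (PadicInt.norm_lt_one_iff_dvd _).mp hlt
  have hn' : (p : ℤ_[p]) ∣ (n : ℤ_[p]) := by
    have := dvd_sub hS hd
    simpa using this
  have : ‖((n : ℤ) : ℤ_[p])‖ < 1 := by
    rw [PadicInt.norm_lt_one_iff_dvd]
    exact_mod_cast hn'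
  exact hn ((PadicInt.norm_int_lt_one_iff_dvd _).mp this)

private lemma aux_norm_inv {p : ℕ} [Fact p.Prime] (x : ℤ_[p]ˣ) :
    ‖((x⁻¹ : ℤ_[p]ˣ) : ℤ_[p]) - 1‖ = ‖(x : ℤ_[p]) - 1‖ := by
  have h : ((x⁻¹ : ℤ_[p]ˣ) : ℤ_[p]) - 1 = ((x⁻¹ : ℤ_[p]ˣ) : ℤ_[p]) * (1 - (x : ℤ_[p])) := by
    have : ((x⁻¹ : ℤ_[p]ˣ) : ℤ_[p]) * (x : ℤ_[p]) = 1 := by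
      rw [← Units.val_mul, inv_mul_cancel, Units.val_one]
    rw [mul_sub, mul_one, this]
  rw [h, norm_mul, PadicInt.norm_units, one_mul, norm_sub_rev]

private lemma aux_key {p : ℕ} [Fact p.Prime] (u : ℤ_[p]ˣ) (hx : ‖(u : ℤ_[p]) - 1‖ < 1)
    (m : ℤ) (hm : m ≠ 0) :
    ‖((u ^ m : ℤ_[p]ˣ) : ℤ_[p]) - 1‖
      = ‖(u : ℤ_[p]) ^ (p ^ ((m.natAbs).factorization p)) - 1‖ ∧
    ‖((m : ℤ) : ℤ_[p])‖ = (p : ℝ) ^ (-((m.natAbs).factorization p : ℤ)) := by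
  set N := m.natAbs with hN
  have hN0 : N ≠ 0 := Int.natAbs_ne_zero.mpr hm
  set t := N.factorization p with ht
  set M := N / p ^ t with hM
  have hfact : p ^ t * M = N := Nat.ordProj_mul_ordCompl_eq_self N p
  have hMnd : ¬ p ∣ M := Nat.not_dvd_ordCompl (Fact.out) hN0
  have hpow : ‖(u : ℤ_[p]) ^ N - 1‖ = ‖(u : ℤ_[p]) ^ (p ^ t) - 1‖ := by
    rw [← hfact, pow_mul]
    refine aux_norm_pow _ (lt_of_le_of_lt (aux_norm_le _ _) hx) M ?_
    exact_mod_cast hMnd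
  constructor
  · have : ‖((u ^ m : ℤ_[p]ˣ) : ℤ_[p]) - 1‖ = ‖(u : ℤ_[p]) ^ N - 1‖ := by
      rcases Int.natAbs_eq m with h | h
      · rw [h, ← hN, zpow_natCast, Units.val_pow_eq_pow_val]
      · rw [h, ← hN, zpow_neg, zpow_natCast, aux_norm_inv, Units.val_pow_eq_pow_val]
    rw [this, hpow]
  · have hMn : ‖((M : ℤ) : ℤ_[p])‖ = 1 := by
      refine le_antisymm (PadicInt.norm_le_one _) ?_
      by_contra hlt
      push_neg at hlt
      exact hMnd (by exact_mod_cast (PadicInt.norm_int_lt_one_iff_dvd _).mp hlt)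
    have : ((m : ℤ) : ℤ_[p]) = (N : ℤ_[p]) ∨ ((m : ℤ) : ℤ_[p]) = -(N : ℤ_[p]) := by
      rcases Int.natAbs_eq m with h | h
      · left; rw [h]; push_cast [← hN]; ring
      · right; rw [h]; push_cast [← hN]; ring
    have hnormN : ‖(N : ℤ_[p])‖ = (p : ℝ) ^ (-(t : ℤ)) := by
      have : (N : ℤ_[p]) = (p : ℤ_[p]) ^ t * (M : ℤ_[p]) := by
        rw [← hfact]; push_cast; ring
      rw [this, norm_mul, norm_pow, PadicInt.norm_p]
      have : ‖(M : ℤ_[p])‖ = 1 := by exact_mod_cast hMn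
      rw [this, mul_one, inv_pow, ← zpow_natCast ((p:ℝ)), ← zpow_neg]
    rcases this with h | h
    · rw [h, hnormN]
    · rw [h, norm_neg, hnormN]

theorem stmt9 (p : ℕ) [Fact p.Prime] (u : ℤ_[p]ˣ)
    (hu : ∃ y : ℤ_[p], (u : ℤ_[p]) = 1 + (p : ℤ_[p]) * y)
    (hu' : ∀ n : ℕ, 0 < n → u ^ n = 1 → u = 1)
    (lam : ℤ_[p]) (hlam : lam ≠ 0) (hlam' : ∃ μ : ℤ_[p], lam = (p : ℤ_[p]) * μ)
    (a : ℕ → ℤ)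
    (ha : Filter.Tendsto (fun n => ((a n : ℤ) : ℤ_[p])) Filter.atTop (nhds lam))
    (w : ℤ_[p])
    (hw : Filter.Tendsto (fun n => ((u ^ (a n) : ℤ_[p]ˣ) : ℤ_[p])) Filter.atTop (nhds w))
    (q : ℤ_[p])
    (hq1 : u = 1 → q = lam)
    (hq2 : u ≠ 1 → ((u : ℤ_[p]) - 1) * q = w - 1) :
    q ≠ 0 := by
  by_cases hu1 : u = 1
  · rw [hq1 hu1]; exact hlam
  -- u ≠ 1 case
  have hq := hq2 hu1
  -- ‖u - 1‖ < 1
  have hun : ‖(u : ℤ_[p]) - 1‖ < 1 := by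
    obtain ⟨y, hy⟩ := hu
    rw [hy, add_sub_cancel_left, norm_mul, PadicInt.norm_p]
    calc ((p:ℝ))⁻¹ * ‖y‖ ≤ (p:ℝ)⁻¹ * 1 := by gcongr; exact PadicInt.norm_le_one _
      _ < 1 := by
        rw [mul_one]
        have hp2 : (2:ℝ) ≤ (p:ℝ) := by exact_mod_cast (Fact.out : p.Prime).two_le
        rw [inv_lt_one_iff₀]; right; linarith
  set k := lam.valuation with hk
  have hnl : ‖lam‖ = (p : ℝ) ^ (-(k:ℤ)) := by
    rw [PadicInt.norm_eq_zpow_neg_valuation hlam]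
  have hp1 : (1:ℝ) < (p:ℝ) := by exact_mod_cast (Fact.out : p.Prime).one_lt
  -- the constant c
  set c := ‖(u : ℤ_[p]) ^ (p ^ k) - 1‖ with hc
  have hcpos : 0 < c := by
    rw [hc, norm_pos_iff]
    intro h
    have : (u : ℤ_[p]) ^ (p ^ k) = 1 := by rwa [sub_eq_zero] at h
    have : u ^ (p ^ k) = 1 := by
      ext; rw [Units.val_pow_eq_pow_val, this, Units.val_one]
    exact hu1 (hu' (p ^ k) (pow_pos (Fact.out : p.Prime).pos k) this)
  -- eventually ‖a n‖ = ‖lam‖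
  have hev : ∀ᶠ n in Filter.atTop, ‖((a n : ℤ) : ℤ_[p]) - lam‖ < ‖lam‖ := by
    have := ha.eventually (Metric.ball_mem_nhds lam (norm_pos_iff.mpr hlam))
    filter_upwards [this] with n hn
    rwa [dist_eq_norm] at hn
  have hev2 : ∀ᶠ n in Filter.atTop, ‖((u ^ (a n) : ℤ_[p]ˣ) : ℤ_[p]) - 1‖ = c := by
    filter_upwards [hev] with n hn
    have hna : ‖((a n : ℤ) : ℤ_[p])‖ = ‖lam‖ := by
      have h1 : ‖((a n : ℤ) : ℤ_[p])‖ ≤ ‖lam‖ := by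
        have := PadicInt.nonarchimedean (((a n : ℤ) : ℤ_[p]) - lam) lam
        simpa using this.trans (max_le hn.le le_rfl)
      rcases lt_or_eq_of_le h1 with h2 | h2
      · exfalso
        have := PadicInt.nonarchimedean (lam - ((a n : ℤ) : ℤ_[p])) ((a n : ℤ) : ℤ_[p])
        simp only [sub_add_cancel] at this
        rw [norm_sub_rev] at hn
        exact absurd (this.trans_lt (max_lt hn h2)) (lt_irrefl _)
      · exact h2
    have han0 : a n ≠ 0 := by
      intro h; rw [h] at hna; simp at hna; exact hlam (norm_eq_zero.mp hna.symm)
    obtain ⟨hkey, hnorm⟩ := aux_key u hun (a n) han0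
    have htk : ((a n).natAbs.factorization p) = k := by
      have := hnorm.symm.trans (hna.trans hnl)
      have := zpow_right_injective₀ (by positivity) (ne_of_gt hp1) this
      omega
    rw [hkey, htk]
  -- limit argument
  have hlim : Filter.Tendsto (fun n => ‖((u ^ (a n) : ℤ_[p]ˣ) : ℤ_[p]) - 1‖)
      Filter.atTop (nhds ‖w - 1‖) := ((hw.sub_const 1).norm)
  have : c = ‖w - 1‖ := tendsto_nhds_unique (tendsto_const_nhds.congr' (hev2.mono fun n h => h.symm)) hlim
  have hw1 : w - 1 ≠ 0 := by
    intro h; rw [h, norm_zero] at this; exact absurd this.symm (ne_of_lt hcpos)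
  intro hq0
  rw [hq0, mul_zero] at hq
  exact hw1 hq.symm
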